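/- Let a₃, a₅, x₁, x₂ ∈ ℂ with a₅ ≠ 0, x₁ ≠ 0, x₁² ≠ 1 and a₅x₁ + 1 ≠ 0. Suppose a₅·x₁·(x₂² − 1) = x₁² − x₂² and a₅·x₂·(x₁² − 1) = a₃·(x₁² − x₂²). Then x₂ = a₃x₁/(a₅x₁ + 1) and a₅ + (1 − a₃² + a₅²)·x₁ + a₅·x₁² = 0. -/

import Mathlib

/-- The algebraic core of the proof that the classifying map has degree two:
from the two fiber equations one deduces `x₂ = a₃x₁/(a₅x₁+1)` and the
quadratic `a₅ + (1 − a₃² + a₅²)x₁ + a₅x₁² = 0`. -/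
theorem degree_two_fiber_equations (a3 a5 x1 x2 : ℂ)
    (ha5 : a5 ≠ 0) (hx1 : x1 ≠ 0) (hx1sq : x1 ^ 2 ≠ 1) (hden : a5 * x1 + 1 ≠ 0)
    (h1 : a5 * x1 * (x2 ^ 2 - 1) = x1 ^ 2 - x2 ^ 2)
    (h2 : a5 * x2 * (x1 ^ 2 - 1) = a3 * (x1 ^ 2 - x2 ^ 2)) :
    x2 = a3 * x1 / (a5 * x1 + 1) ∧
      a5 + (1 - a3 ^ 2 + a5 ^ 2) * x1 + a5 * x1 ^ 2 = 0 := by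
  have hsq : x1 ^ 2 - 1 ≠ 0 := sub_ne_zero.mpr hx1sq
  have hA : x2 ^ 2 * (a5 * x1 + 1) = x1 * (a5 + x1) := by linear_combination h1
  have hC : (a5 * x1 + 1) * (x1 ^ 2 - x2 ^ 2) = a5 * x1 * (x1 ^ 2 - 1) := by
    linear_combination -hA
  have hB : x2 * (a5 * x1 + 1) = a3 * x1 := by
    have := mul_left_cancel₀ (mul_ne_zero ha5 hsq)
      (show a5 * (x1 ^ 2 - 1) * (x2 * (a5 * x1 + 1)) = a5 * (x1 ^ 2 - 1) * (a3 * x1) by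
        linear_combination (a5 * x1 + 1) * h2 + a3 * hC)
    exact this
  constructor
  · rw [eq_div_iff hden]
    linear_combination hB
  · have := mul_left_cancel₀ hx1
      (show x1 * (a5 + (1 - a3 ^ 2 + a5 ^ 2) * x1 + a5 * x1 ^ 2) = x1 * 0 by
        linear_combination -(a5 * x1 + 1) * hA + (x2 * (a5 * x1 + 1) + a3 * x1) * hB)
    simpa using this
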